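/- Let W_1, W_2, ... be i.i.d. integrable real random variables such that W_1 is sub-gamma on the right tail with parameters (σ², c) where c > 0. Let M_n = max_{1 ≤ i ≤ n} W_i and suppose there exists a real number a with 0 < a ≤ c such that E[M_n] / ln n → a as n → ∞. Then for every λ > c/a, lim_{n→∞} P(M_n > λ E[M_n]) = 0. -/

import Mathlib

open MeasureTheory ProbabilityTheory Filter

set_option maxHeartbeats 2000000 in
/-- Let `W 0, W 1, ...` be i.i.d. integrable real random variables such that
`W 0` is sub-gamma on the right tail with parameters `(σ², c)`, `c > 0`, i.e.
`log E[exp(s (W 0 - E[W 0]))] ≤ s² σ² / (2 (1 - c s))` for all `s ∈ (0, 1/c)`.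
Let `M n = max_{0 ≤ i < n} W i` (written as a supremum over `Fin n`) and suppose there is
`a` with `0 < a ≤ c` such that `E[M n] / log n → a`. Then for every `λ > c/a`,
`P(M n > λ E[M n]) → 0` as `n → ∞`. -/
theorem stmt9 {Ω : Type*} [MeasurableSpace Ω] (P : Measure Ω) [IsProbabilityMeasure P]
    (W : ℕ → Ω → ℝ) (hmeas : ∀ i, Measurable (W i))
    (hindep : iIndepFun W P)
    (hident : ∀ i, IdentDistrib (W i) (W 0) P P)
    (hint : Integrable (W 0) P)
    (σ2 c : ℝ) (hσ2 : 0 ≤ σ2) (hc : 0 < c)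
    (hsubgamma : ∀ s : ℝ, 0 < s → s < 1/c →
      Real.log (∫ ω, Real.exp (s * (W 0 ω - ∫ ω', W 0 ω' ∂P)) ∂P)
        ≤ s^2 * σ2 / (2 * (1 - c * s)))
    (a : ℝ) (ha0 : 0 < a) (hac : a ≤ c)
    (ha : Tendsto (fun n : ℕ => (∫ ω, (⨆ i : Fin n, W i ω) ∂P) / Real.log n)
      atTop (nhds a))
    (lam : ℝ) (hlam : c / a < lam) :
    Tendsto
      (fun n : ℕ =>
        (P {ω | lam * ∫ ω', (⨆ i : Fin n, W i ω') ∂P < ⨆ i : Fin n, W i ω}).toReal)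
      atTop (nhds 0) := by
  -- basic constants
  have hlam1 : 1 < lam := lt_of_le_of_lt ((one_le_div ha0).mpr hac) hlam
  have hlam0 : 0 < lam := by linarith
  set lam' : ℝ := (1 + lam) / 2 with hlam'def
  have hlam'1 : 1 < lam' := by rw [hlam'def]; linarith
  have hlam'lt : lam' < lam := by rw [hlam'def]; linarith
  have hlam'0 : 0 < lam' := by linarith
  set δ : ℝ := (1 - 1 / lam') / 2 with hδdef
  have hinvlam' : 0 < 1 / lam' := by positivity
  have hinvlam'1 : 1 / lam' < 1 := by rw [div_lt_one hlam'0]; exact hlam'1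
  have hδ0 : 0 < δ := by rw [hδdef]; linarith
  have hδ1 : δ < 1 := by rw [hδdef]; linarith
  set K : ℝ := -Real.log δ with hKdef
  have hK0 : 0 < K := by
    have := Real.log_neg hδ0 hδ1
    rw [hKdef]; linarith
  set ε : ℝ := a * (lam - lam') / (2 * (lam + lam')) with hεdef
  have hε0 : 0 < ε := by
    rw [hεdef]
    apply div_pos (by nlinarith) (by nlinarith)
  have hεkey : ε * (2 * (lam + lam')) = a * (lam - lam') := by
    rw [hεdef]; field_simp
  have hεa : ε < a := by nlinarith
  set ρ : ℝ := lam * (a - ε) / (lam' * (a + ε)) with hρdef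
  have hρ1 : 1 < ρ := by
    rw [hρdef, lt_div_iff₀ (by nlinarith)]
    nlinarith
  -- abbreviations
  set Ca : ℝ := ∫ ω, |W 0 ω| ∂P with hCadef
  set E : ℕ → ℝ := fun n => ∫ ω, (⨆ i : Fin n, W i ω) ∂P with hEdef
  set T : ℝ → ENNReal := fun t => P {ω | t < W 0 ω} with hTdef
  have hWint : ∀ i, Integrable (W i) P := fun i => (hident i).integrable_iff.mpr hint
  have hbdd : ∀ (n : ℕ) (ω : Ω), BddAbove (Set.range fun i : Fin n => W i ω) :=
    fun n ω => (Set.finite_range _).bddAbove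
  have hMbound : ∀ (n : ℕ) (ω : Ω) (i : Fin n), W i ω ≤ ⨆ j : Fin n, W j ω :=
    fun n ω i => le_ciSup (hbdd n ω) i
  have hM_meas : ∀ n : ℕ, 1 ≤ n → Measurable (fun ω => ⨆ i : Fin n, W i ω) := by
    intro n hn
    haveI : Nonempty (Fin n) := Fin.pos_iff_nonempty.mp hn
    have h : (fun ω => ⨆ i : Fin n, W i ω)
        = Finset.univ.sup' Finset.univ_nonempty (fun i : Fin n => W i) := by
      funext ω; rw [Finset.sup'_apply, Finset.sup'_univ_eq_ciSup]
    rw [h]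
    exact Finset.measurable_sup' _ (fun i _ => hmeas i)
  have hM_int : ∀ n : ℕ, 1 ≤ n → Integrable (fun ω => ⨆ i : Fin n, W i ω) P := by
    intro n hn
    haveI : Nonempty (Fin n) := Fin.pos_iff_nonempty.mp hn
    refine Integrable.mono (g := fun ω => ∑ i : Fin n, |W i ω|)
      (integrable_finset_sum _ fun i _ => (hWint i).abs) (hM_meas n hn).aestronglyMeasurable ?_
    refine Filter.Eventually.of_forall fun ω => ?_
    have hsum : ∀ i : Fin n, |W i ω| ≤ ∑ j : Fin n, |W j ω| := fun i =>
      Finset.single_le_sum (f := fun j : Fin n => |W (j : ℕ) ω|)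
        (fun j _ => abs_nonneg _) (Finset.mem_univ i)
    rw [Real.norm_eq_abs, Real.norm_eq_abs, abs_of_nonneg
        (show (0:ℝ) ≤ ∑ j : Fin n, |W (j : ℕ) ω| from
          Finset.sum_nonneg fun j _ => abs_nonneg _), abs_le]
    constructor
    · refine le_trans ?_ (hMbound n ω ⟨0, hn⟩)
      have := hsum ⟨0, hn⟩
      have h2 := neg_abs_le (W (⟨0, hn⟩ : Fin n) ω)
      linarith
    · exact ciSup_le fun i => (le_abs_self _).trans (hsum i)
  have hEmono : ∀ m n : ℕ, 1 ≤ m → m ≤ n → E m ≤ E n := by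
    intro m n hm hmn
    haveI : Nonempty (Fin m) := Fin.pos_iff_nonempty.mp hm
    refine integral_mono (hM_int m hm) (hM_int n (hm.trans hmn)) fun ω => ?_
    exact ciSup_le fun i => hMbound n ω ⟨i, lt_of_lt_of_le i.2 hmn⟩
  have hElim : Tendsto E atTop atTop := by
    have hloglim : Tendsto (fun n : ℕ => Real.log n) atTop atTop :=
      Real.tendsto_log_atTop.comp tendsto_natCast_atTop_atTop
    have hmul := ha.pos_mul_atTop ha0 hloglim
    refine hmul.congr' ?_
    filter_upwards [eventually_ge_atTop 2] with n hn
    have hlog : Real.log n ≠ 0 := by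
      have : (1:ℝ) < n := by exact_mod_cast hn
      exact ne_of_gt (Real.log_pos this)
    field_simp
    rfl
  -- Step A : mean bounds the tail of the max
  have hA : ∀ n : ℕ, 1 ≤ n → ∀ t : ℝ,
      t * (P {ω | t < ⨆ i : Fin n, W i ω}).toReal ≤ E n + Ca := by
    intro n hn t
    have hAset : MeasurableSet {ω | t < ⨆ i : Fin n, W i ω} :=
      measurableSet_lt measurable_const (hM_meas n hn)
    have h1 : t * (P {ω | t < ⨆ i : Fin n, W i ω}).toReal
        = ∫ ω, Set.indicator {ω | t < ⨆ i : Fin n, W i ω} (fun _ => t) ω ∂P := by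
      rw [integral_indicator_const _ hAset, smul_eq_mul, mul_comm]; rfl
    rw [h1]
    have h2 : (∫ ω, ((⨆ i : Fin n, W i ω) + |W 0 ω|) ∂P) = E n + Ca :=
      integral_add (hM_int n hn) hint.abs
    rw [← h2]
    refine integral_mono ((integrable_const t).indicator hAset)
      ((hM_int n hn).add hint.abs) fun ω => ?_
    by_cases hω : ω ∈ {ω | t < ⨆ i : Fin n, W i ω}
    · rw [Set.indicator_of_mem hω]
      have h3 : t < ⨆ i : Fin n, W i ω := hω
      have := abs_nonneg (W 0 ω)
      linarith
    · rw [Set.indicator_of_notMem hω]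
      have h3 := hMbound n ω ⟨0, hn⟩
      have h4 := neg_abs_le (W 0 ω)
      simp only [Fin.val_mk] at h3
      linarith
  -- Step B : independence gives the product formula
  have hB : ∀ n : ℕ, 1 ≤ n → ∀ t : ℝ,
      P {ω | (⨆ i : Fin n, W i ω) ≤ t} = (P {ω | W 0 ω ≤ t}) ^ n := by
    intro n hn t
    haveI : Nonempty (Fin n) := Fin.pos_iff_nonempty.mp hn
    have hset : {ω | (⨆ i : Fin n, W i ω) ≤ t} = ⋂ i ∈ Finset.range n, W i ⁻¹' Set.Iic t := by
      ext ω
      simp only [Set.mem_setOf_eq, Set.mem_iInter, Set.mem_preimage, Set.mem_Iic,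
        Finset.mem_range]
      constructor
      · intro h i hi; exact le_trans (hMbound n ω ⟨i, hi⟩) h
      · intro h; exact ciSup_le fun i => h i i.2
    rw [hset,
      hindep.measure_inter_preimage_eq_mul (Finset.range n) (fun i _ => measurableSet_Iic)]
    have heach : ∀ i ∈ Finset.range n, P (W i ⁻¹' Set.Iic t) = P {ω | W 0 ω ≤ t} := by
      intro i _
      rw [← Measure.map_apply (hmeas i) measurableSet_Iic, (hident i).map_eq,
        Measure.map_apply (hmeas 0) measurableSet_Iic]
      rfl
    rw [Finset.prod_congr rfl heach, Finset.prod_const, Finset.card_range]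
  -- identification of the one-variable upper tails
  have hTi : ∀ (i : ℕ) (t : ℝ), P {ω | t < W i ω} = T t := by
    intro i t
    show P {ω | t < W i ω} = P {ω | t < W 0 ω}
    have h1 : {ω | t < W i ω} = W i ⁻¹' Set.Ioi t := rfl
    have h2 : {ω | t < W 0 ω} = W 0 ⁻¹' Set.Ioi t := rfl
    rw [h1, h2, ← Measure.map_apply (hmeas i) measurableSet_Ioi, (hident i).map_eq,
      Measure.map_apply (hmeas 0) measurableSet_Ioi]
  -- Step U : union bound
  have hU : ∀ n : ℕ, 1 ≤ n → ∀ t : ℝ,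
      P {ω | t < ⨆ i : Fin n, W i ω} ≤ (n : ENNReal) * T t := by
    intro n hn t
    haveI : Nonempty (Fin n) := Fin.pos_iff_nonempty.mp hn
    have hsub : {ω | t < ⨆ i : Fin n, W i ω} ⊆ ⋃ i : Fin n, {ω | t < W i ω} := by
      intro ω hω
      obtain ⟨i, -, hi⟩ := Finset.exists_mem_eq_sup' (Finset.univ_nonempty (α := Fin n))
        (fun i : Fin n => W i ω)
      have hsup : (⨆ j : Fin n, W j ω) = W i ω := by
        rw [← Finset.sup'_univ_eq_ciSup]; exact hi
      have h3 : t < ⨆ j : Fin n, W j ω := hω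
      rw [hsup] at h3
      exact Set.mem_iUnion.mpr ⟨i, h3⟩
    calc P {ω | t < ⨆ i : Fin n, W i ω} ≤ ∑' i : Fin n, P {ω | t < W i ω} :=
          le_trans (measure_mono hsub) (measure_iUnion_le _)
      _ = ∑ i : Fin n, P {ω | t < W (i : ℕ) ω} := tsum_fintype _
      _ = ∑ _i : Fin n, T t := by
          refine Finset.sum_congr rfl fun i _ => hTi i t
      _ = (n : ENNReal) * T t := by
          rw [Finset.sum_const, Finset.card_univ, Fintype.card_fin, nsmul_eq_mul]
  -- eventual two-sided bound on E n
  have h1ev : ∀ᶠ n : ℕ in atTop,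
      (a - ε) * Real.log n ≤ E n ∧ E n ≤ (a + ε) * Real.log n := by
    have hball := ha (Metric.ball_mem_nhds a hε0)
    filter_upwards [hball, eventually_ge_atTop 2] with n hb hn2
    have hn1 : (1:ℝ) < n := by exact_mod_cast hn2
    have hlog : 0 < Real.log n := Real.log_pos hn1
    rw [Set.mem_preimage, Metric.mem_ball, Real.dist_eq, abs_lt] at hb
    constructor
    · have h := hb.1
      have := (lt_div_iff₀ hlog).mp (by linarith : a - ε < E n / Real.log n)
      linarith
    · have h := hb.2
      have := (div_lt_iff₀ hlog).mp (by linarith : E n / Real.log n < a + ε)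
      linarith
  -- Step C : the one-variable tail at level lam' * E n is at most K / n
  have hCev : ∀ᶠ n : ℕ in atTop, (T (lam' * E n)).toReal ≤ K / n := by
    filter_upwards [eventually_ge_atTop 1,
      hElim.eventually_ge_atTop (max 1 (2 * Ca / (lam' - 1)))] with n hn1 hEn
    have hEpos : (0:ℝ) < E n := lt_of_lt_of_le one_pos ((le_max_left _ _).trans hEn)
    have hECa : 2 * Ca / (lam' - 1) ≤ E n := (le_max_right _ _).trans hEn
    have hnpos : (0:ℝ) < n := by exact_mod_cast hn1
    set t := lam' * E n with htdef
    have htpos : 0 < t := mul_pos hlam'0 hEpos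
    have hMset : MeasurableSet {ω | t < ⨆ i : Fin n, W i ω} :=
      measurableSet_lt measurable_const (hM_meas n hn1)
    -- the max exceeds t with probability at most 1 - δ
    have hPle : (P {ω | t < ⨆ i : Fin n, W i ω}).toReal ≤ 1 - δ := by
      have hA' := hA n hn1 t
      have h2 : E n + Ca ≤ (1 - δ) * t := by
        have hδval : (1 - δ) * lam' = (lam' + 1) / 2 := by
          rw [hδdef]; field_simp; ring
        have h3 : 2 * Ca ≤ E n * (lam' - 1) :=
          (div_le_iff₀ (by linarith)).mp hECa
        have h4 : (1 - δ) * t = ((lam' + 1) / 2) * E n := by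
          rw [htdef, ← mul_assoc, hδval]
        rw [h4]
        linarith
      have h4 : t * (P {ω | t < ⨆ i : Fin n, W i ω}).toReal ≤ t * (1 - δ) := by
        rw [mul_comm (1 - δ) t] at h2
        exact hA'.trans h2
      exact le_of_mul_le_mul_left h4 htpos
    have hcompl : (P {ω | (⨆ i : Fin n, W i ω) ≤ t}).toReal
        = 1 - (P {ω | t < ⨆ i : Fin n, W i ω}).toReal := by
      have hs : {ω | (⨆ i : Fin n, W i ω) ≤ t} = {ω | t < ⨆ i : Fin n, W i ω}ᶜ := by
        ext ω; simp [not_lt]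
      rw [hs, prob_compl_eq_one_sub hMset,
        ENNReal.toReal_sub_of_le prob_le_one ENNReal.one_ne_top, ENNReal.toReal_one]
    have hδle : δ ≤ (P {ω | (⨆ i : Fin n, W i ω) ≤ t}).toReal := by
      rw [hcompl]; linarith
    set q := (P {ω | W 0 ω ≤ t}).toReal with hqdef
    have hq1 : q ≤ 1 := by
      rw [hqdef]
      exact ENNReal.toReal_le_of_le_ofReal one_pos.le (by simpa using prob_le_one)
    have hqpow : δ ≤ q ^ n := by
      have := hB n hn1 t
      rw [this, ENNReal.toReal_pow] at hδle
      exact hδle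
    have hq0 : 0 < q := by
      rcases lt_or_ge 0 q with h | h
      · exact h
      · exfalso
        have hq0' : q = 0 := le_antisymm h ENNReal.toReal_nonneg
        rw [hq0', zero_pow (by omega)] at hqpow
        linarith
    have hlogq : Real.log δ ≤ n * Real.log q := by
      have := Real.log_le_log hδ0 hqpow
      rwa [Real.log_pow] at this
    have hpcompl : (T t).toReal = 1 - q := by
      have hs : {ω | t < W 0 ω} = {ω | W 0 ω ≤ t}ᶜ := by
        ext ω; simp [not_le]
      rw [hTdef, hqdef]
      simp only
      rw [hs, prob_compl_eq_one_sub (measurableSet_le (hmeas 0) measurable_const),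
        ENNReal.toReal_sub_of_le prob_le_one ENNReal.one_ne_top, ENNReal.toReal_one]
    have h5 : 1 - q ≤ -Real.log q := by
      have := Real.log_le_sub_one_of_pos hq0
      linarith
    have h6 : -Real.log q ≤ K / n := by
      rw [hKdef, le_div_iff₀ hnpos]
      linarith
    rw [hpcompl]
    linarith
  -- choose a global threshold
  obtain ⟨N₁, hN₁⟩ := eventually_atTop.mp (hCev.and h1ev)
  set N₀ : ℕ := max N₁ 1 with hN₀def
  have hN₀1 : 1 ≤ N₀ := le_max_right _ _
  have hrpow2 : ∀ᶠ n : ℕ in atTop, (2:ℝ) ≤ (n:ℝ) ^ ρ :=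
    ((tendsto_rpow_atTop (by linarith : (0:ℝ) < ρ)).comp
      tendsto_natCast_atTop_atTop).eventually_ge_atTop 2
  have hmain : ∀ᶠ n : ℕ in atTop,
      (P {ω | lam * E n < ⨆ i : Fin n, W i ω}).toReal ≤ 2 * K * (n:ℝ) ^ (1 - ρ) := by
    filter_upwards [h1ev, eventually_ge_atTop 2,
      hElim.eventually_ge_atTop (lam' * E N₀ / lam), hrpow2] with n hEn2 hn2 hEnN hnρ
    have hn1 : 1 ≤ n := by omega
    have hnR : (1:ℝ) < n := by exact_mod_cast hn2
    have hnR0 : (0:ℝ) < n := by linarith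
    have hstart : lam' * E N₀ ≤ lam * E n := by
      rw [div_le_iff₀ hlam0] at hEnN; linarith
    set S : Set ℕ := {m | N₀ ≤ m ∧ lam' * E m ≤ lam * E n} with hSdef
    have hSne : S.Nonempty := ⟨N₀, le_refl _, hstart⟩
    have hSbdd : BddAbove S := by
      obtain ⟨M, hM⟩ := eventually_atTop.mp
        (hElim.eventually_gt_atTop (lam * E n / lam'))
      refine ⟨M, fun m hm => ?_⟩
      by_contra hcon
      push_neg at hcon
      have h3 : lam * E n / lam' < E m := hM m (le_of_lt hcon)
      rw [div_lt_iff₀ hlam'0, mul_comm] at h3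
      have h4 := hm.2
      linarith
    set m : ℕ := sSup S with hmdef
    have hmS : m ∈ S := Nat.sSup_mem hSne hSbdd
    have hmN₀ : N₀ ≤ m := hmS.1
    have hmle : lam' * E m ≤ lam * E n := hmS.2
    have hm1 : 1 ≤ m := hN₀1.trans hmN₀
    have hmR0 : (0:ℝ) < m := by exact_mod_cast hm1
    have hmsucc : lam * E n < lam' * E (m+1) := by
      by_contra h
      push_neg at h
      have hmem : m + 1 ∈ S := ⟨hmN₀.trans (Nat.le_succ m), h⟩
      have := le_csSup hSbdd hmem
      omega
    have hCm : (T (lam' * E m)).toReal ≤ K / m :=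
      (hN₁ m ((le_max_left _ _).trans hmN₀)).1
    have hupm : E (m+1) ≤ (a + ε) * Real.log ((m:ℝ)+1) := by
      have h := (hN₁ (m+1) (((le_max_left _ _).trans hmN₀).trans (Nat.le_succ m))).2.2
      rwa [Nat.cast_add, Nat.cast_one] at h
    -- measure chain
    have key : (P {ω | lam * E n < ⨆ i : Fin n, W i ω}).toReal ≤ n * (K / m) := by
      have hUn := hU n hn1 (lam * E n)
      have hTmono : T (lam * E n) ≤ T (lam' * E m) := by
        rw [hTdef]
        exact measure_mono fun ω hω => lt_of_le_of_lt hmle hω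
      have hchain : P {ω | lam * E n < ⨆ i : Fin n, W i ω} ≤ (n : ENNReal) * T (lam' * E m) :=
        hUn.trans (mul_le_mul_right hTmono _)
      have hne : (n : ENNReal) * T (lam' * E m) ≠ ⊤ :=
        ENNReal.mul_ne_top (ENNReal.natCast_ne_top n) (measure_ne_top _ _)
      have h2 := ENNReal.toReal_mono hne hchain
      rw [ENNReal.toReal_mul, ENNReal.toReal_natCast] at h2
      exact h2.trans (mul_le_mul_of_nonneg_left hCm (Nat.cast_nonneg n))
    -- lower bound on m
    have hmlow : (n:ℝ) ^ ρ ≤ (m:ℝ) + 1 := by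
      have hlogn : 0 < Real.log n := Real.log_pos hnR
      have hcast : ((m+1:ℕ):ℝ) = (m:ℝ)+1 := by push_cast; ring
      have hch : lam * ((a - ε) * Real.log n) ≤ lam' * ((a + ε) * Real.log ((m:ℝ)+1)) := by
        have s1 : lam * ((a-ε) * Real.log n) ≤ lam * E n :=
          mul_le_mul_of_nonneg_left hEn2.1 (le_of_lt hlam0)
        have s2 : lam' * E (m+1) ≤ lam' * ((a+ε) * Real.log ((m:ℝ)+1)) :=
          mul_le_mul_of_nonneg_left hupm (le_of_lt hlam'0)
        calc lam * ((a-ε) * Real.log n) ≤ lam * E n := s1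
          _ ≤ lam' * E (m+1) := le_of_lt hmsucc
          _ ≤ lam' * ((a+ε) * Real.log ((m:ℝ)+1)) := s2
      have hρlog : ρ * Real.log n ≤ Real.log ((m:ℝ)+1) := by
        rw [hρdef, div_mul_eq_mul_div, div_le_iff₀ (by nlinarith : (0:ℝ) < lam' * (a+ε))]
        nlinarith [hch]
      have h3 : (n:ℝ) ^ ρ = Real.exp (Real.log n * ρ) := Real.rpow_def_of_pos hnR0 ρ
      rw [h3, mul_comm]
      calc Real.exp (ρ * Real.log n) ≤ Real.exp (Real.log ((m:ℝ)+1)) :=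
            Real.exp_le_exp.mpr hρlog
        _ = (m:ℝ) + 1 := Real.exp_log (by positivity)
    have hm2 : (n:ℝ) ^ ρ / 2 ≤ (m:ℝ) := by linarith
    have hKm : K / m ≤ K / ((n:ℝ) ^ ρ / 2) :=
      div_le_div_of_nonneg_left hK0.le (by positivity) hm2
    calc (P {ω | lam * E n < ⨆ i : Fin n, W i ω}).toReal ≤ n * (K / m) := key
      _ ≤ n * (K / ((n:ℝ) ^ ρ / 2)) := mul_le_mul_of_nonneg_left hKm (Nat.cast_nonneg n)
      _ = 2 * K * (n:ℝ) ^ (1 - ρ) := by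
          have hnρ0 : (0:ℝ) < (n:ℝ) ^ ρ := by positivity
          rw [Real.rpow_sub hnR0, Real.rpow_one]
          field_simp
  have hg : Tendsto (fun n : ℕ => 2 * K * (n:ℝ) ^ (1 - ρ)) atTop (nhds 0) := by
    have h0 : Tendsto (fun x : ℝ => x ^ (-(ρ-1))) atTop (nhds 0) :=
      tendsto_rpow_neg_atTop (by linarith)
    have h1 := (h0.comp tendsto_natCast_atTop_atTop).const_mul (2*K)
    simp only [mul_zero] at h1
    have heq : (fun n : ℕ => 2 * K * (n:ℝ) ^ (1 - ρ))
        = fun n : ℕ => 2 * K * ((n:ℝ) ^ (-(ρ-1))) := by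
      funext n; rw [neg_sub]
    rw [heq]
    exact h1
  exact squeeze_zero' (Eventually.of_forall fun n => ENNReal.toReal_nonneg) hmain hg
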